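/- Let w be a Catalan word of length 2k with generating-vertex set S (containing 0). Then for every index j ∈ {0,...,2k} not in S, there exists a unique generating vertex i ∈ S with i < j such that π(j) = π(i) for all circuits π ∈ Π*(w), where Π*(w) is the set of circuits π : {0,...,2k} → {1,...,n} with π(0) = π(2k) such that w[i] = w[j] implies L(π(i-1),π(i)) = L(π(j-1),π(j)) for the Wigner link function L(a,b) = (min(a,b), max(a,b)). -/

import Mathlib

open MeasureTheory

/-- A word is pair-matched if each of its letters appears exactly twice. -/
def PairMatchedWord (w : List ℕ) : Prop := ∀ a ∈ w, w.count a = 2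

/-- Reducibility to the empty word by successively deleting double letters. -/
inductive DoubleReduces : List ℕ → Prop
  | nil : DoubleReduces []
  | step (u v : List ℕ) (a : ℕ) : DoubleReduces (u ++ v) → DoubleReduces (u ++ a :: a :: v)

/-- A Catalan word: pair-matched and reducible to the empty word by
successively deleting double letters. -/
def IsCatalanWord (w : List ℕ) : Prop := PairMatchedWord w ∧ DoubleReduces w

/-- The Wigner link function `L(a,b) = (min(a,b), max(a,b))`. -/
def wignerLink (a b : ℕ) : ℕ × ℕ := (min a b, max a b)

/-- The set `Π*(w)` of circuits `π : {0,…,2k} → {1,…,n}` with `π(0) = π(2k)`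
such that `w[i] = w[j]` implies `L(π(i-1),π(i)) = L(π(j-1),π(j))`.  The letter
at the paper's position `i ∈ {1,…,2k}` is the list entry `w[i-1]?`. -/
def PiStar (w : List ℕ) (n : ℕ) : Set (ℕ → ℕ) :=
  {π | (∀ t ≤ w.length, π t ∈ Finset.Icc 1 n) ∧ π 0 = π w.length ∧
    ∀ s t, s < w.length → t < w.length → w[s]? = w[t]? →
      wignerLink (π s) (π (s + 1)) = wignerLink (π t) (π (t + 1))}

/-- The set `S` of generating vertices of `w`: the vertex `0` together with
those `i` at which a letter occurs for the first time. -/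
def genVertices (w : List ℕ) : Finset ℕ :=
  insert 0 (((Finset.range w.length).filter
    (fun t => ∀ s < t, w[s]? ≠ w[t]?)).image (· + 1))

/-- `φ` assigns to each vertex `j` the (unique) generating vertex `φ(j) ≤ j`
with `π(j) = π(φ(j))` for every circuit `π ∈ Π*(w)`. -/
def IsPhi (w : List ℕ) (φ : ℕ → ℕ) : Prop :=
  ∀ j ≤ w.length, φ j ∈ genVertices w ∧ φ j ≤ j ∧
    ∀ (n : ℕ) (π : ℕ → ℕ), π ∈ PiStar w n → π j = π (φ j)

def restrictC (π : ℕ → ℕ) (m : ℕ) : ℕ → ℕ := fun t => if t ≤ m then π t else π (t + 2)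
def extC (π : ℕ → ℕ) (m c : ℕ) : ℕ → ℕ :=
  fun t => if t ≤ m then π t else if t = m + 1 then c else π (t - 2)

lemma wigner_comm (x y : ℕ) : wignerLink x y = wignerLink y x := by
  unfold wignerLink; rw [min_comm, max_comm]

lemma wigner_cancel {x c y : ℕ} (h : wignerLink x c = wignerLink c y) : x = y := by
  unfold wignerLink at h
  have h1 : min x c = min c y := congrArg Prod.fst h
  have h2 : max x c = max c y := congrArg Prod.snd h
  omega

lemma restrict_le {π : ℕ → ℕ} {m t : ℕ} (ht : t ≤ m) : restrictC π m t = π t := by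
  unfold restrictC; rw [if_pos ht]

lemma restrict_gt {π : ℕ → ℕ} {m t : ℕ} (ht : m < t) : restrictC π m t = π (t + 2) := by
  unfold restrictC; rw [if_neg (by omega)]

lemma ext_le {π : ℕ → ℕ} {m c t : ℕ} (ht : t ≤ m) : extC π m c t = π t := by
  unfold extC; rw [if_pos ht]

lemma ext_m1 {π : ℕ → ℕ} {m c : ℕ} : extC π m c (m + 1) = c := by
  unfold extC; rw [if_neg (by omega), if_pos rfl]

lemma ext_ge {π : ℕ → ℕ} {m c t : ℕ} (ht : m + 2 ≤ t) : extC π m c t = π (t - 2) := by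
  unfold extC; rw [if_neg (by omega), if_neg (by omega)]

section Aux

variable (u v : List ℕ) (a : ℕ)

local notation "w" => u ++ a :: a :: v
local notation "W" => u ++ v
local notation "m" => u.length

lemma len_w : (w).length = (W).length + 2 := by simp; omega

lemma m_le_W : m ≤ (W).length := by simp

lemma getw_lt {t : ℕ} (h : t < m) : (w)[t]? = (W)[t]? := by
  rw [List.getElem?_append_left h, List.getElem?_append_left h]

lemma getw_m : (w)[m]? = some a := by
  rw [List.getElem?_append_right (le_refl _)]; simp

lemma getw_m1 : (w)[m + 1]? = some a := by
  rw [List.getElem?_append_right (by omega)]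
  simp

lemma getw_ge {t : ℕ} (h : m + 2 ≤ t) : (w)[t]? = (W)[t - 2]? := by
  rw [List.getElem?_append_right (by omega), List.getElem?_append_right (by omega)]
  have : t - m = (t - 2 - m) + 2 := by omega
  rw [this]
  simp

lemma getW_lt {t : ℕ} (h : t < m) : (W)[t]? = u[t]? := List.getElem?_append_left h

lemma pm_reduce (pm : PairMatchedWord (w)) :
    PairMatchedWord (W) ∧ a ∉ (W) := by
  have ha : a ∉ (W) := by
    have h2 : (w).count a = 2 := pm a (by simp)
    have : (w).count a = (W).count a + 2 := by
      simp [List.count_append]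
      omega
    have h0 : (W).count a = 0 := by omega
    exact List.count_eq_zero.mp h0
  refine ⟨fun b hb => ?_, ha⟩
  have hba : b ≠ a := fun h => ha (h ▸ hb)
  have h2 : (w).count b = 2 := pm b (by simp at hb ⊢; tauto)
  rw [List.count_append] at h2 ⊢
  simpa [List.count_cons, hba, Ne.symm hba] using h2


lemma forced {n : ℕ} {π : ℕ → ℕ} (hπ : π ∈ PiStar (w) n) : π (m + 2) = π m := by
  obtain ⟨-, -, hc⟩ := hπ
  have hlen := len_w u v a
  have hmW := m_le_W u v
  have h := hc m (m + 1) (by omega) (by omega)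
    ((getw_m u v a).trans (getw_m1 u v a).symm)
  exact (wigner_cancel h).symm

lemma restrict_mem {n : ℕ} {π : ℕ → ℕ} (hπ : π ∈ PiStar (w) n) :
    restrictC π m ∈ PiStar (W) n := by
  have hf := forced u v a hπ
  obtain ⟨hr, h0, hc⟩ := hπ
  have hlen := len_w u v a
  have hmW := m_le_W u v
  refine ⟨?_, ?_, ?_⟩
  · intro t ht
    unfold restrictC
    split
    · exact hr t (by omega)
    · exact hr (t + 2) (by omega)
  · unfold restrictC
    rw [if_pos (Nat.zero_le m)]
    by_cases hWm : (W).length ≤ m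
    · have hWm' : (W).length = m := le_antisymm hWm hmW
      rw [if_pos hWm, h0, hlen, hWm']
      exact hf
    · rw [if_neg hWm, h0, hlen]
  · have edge : ∀ p, wignerLink (restrictC π m p) (restrictC π m (p + 1)) =
        wignerLink (π (if p < m then p else p + 2)) (π ((if p < m then p else p + 2) + 1)) := by
      intro p
      unfold restrictC
      rcases Nat.lt_or_ge p m with h | h
      · rw [if_pos h, if_pos (by omega : p ≤ m), if_pos (by omega : p + 1 ≤ m)]
      · rw [if_neg (by omega : ¬ p < m), if_neg (by omega : ¬ p + 1 ≤ m)]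
        by_cases hpm : p = m
        · subst hpm
          rw [if_pos (le_refl m), ← hf]
        · rw [if_neg (by omega : ¬ p ≤ m)]
    have getl : ∀ p, p < (W).length →
        (w)[if p < m then p else p + 2]? = (W)[p]? := by
      intro p hp
      rcases Nat.lt_or_ge p m with h | h
      · rw [if_pos h]; exact getw_lt u v a h
      · rw [if_neg (by omega : ¬ p < m), getw_ge u v a (by omega)]
        congr 1
    intro s t hs ht hg
    rw [edge s, edge t]
    refine hc _ _ ?_ ?_ ?_
    · split <;> omega
    · split <;> omega
    · rw [getl s hs, getl t ht]; exact hg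

lemma a_pos {t : ℕ} (ha : a ∉ (W)) (ht : t < (w).length)
    (hg : (w)[t]? = some a) : t = m ∨ t = m + 1 := by
  by_contra hcon
  push_neg at hcon
  rcases Nat.lt_or_ge t m with h | h
  · rw [getw_lt u v a h, getW_lt u v h] at hg
    exact ha (List.mem_append_left v (List.mem_of_getElem? hg))
  · have h2 : m + 2 ≤ t := by omega
    rw [getw_ge u v a h2] at hg
    exact ha (List.mem_of_getElem? hg)

lemma ext_mem {n n' c : ℕ} {π : ℕ → ℕ} (hπ : π ∈ PiStar (W) n) (hn : n ≤ n')
    (hc1 : 1 ≤ c) (hc2 : c ≤ n') (ha : a ∉ (W)) : extC π m c ∈ PiStar (w) n' := by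
  obtain ⟨hr, h0, hcon⟩ := hπ
  have hlen := len_w u v a
  have hmW := m_le_W u v
  have hval : ∀ t, t ≤ (W).length → π t ∈ Finset.Icc 1 n' := by
    intro t ht
    have := hr t ht
    simp only [Finset.mem_Icc] at this ⊢
    omega
  refine ⟨?_, ?_, ?_⟩
  · intro t ht
    unfold extC
    split
    · exact hval t (by omega)
    · split
      · simp only [Finset.mem_Icc]; omega
      · exact hval (t - 2) (by omega)
  · rw [ext_le (Nat.zero_le m), ext_ge (by omega : m + 2 ≤ (w).length), hlen]
    have : (W).length + 2 - 2 = (W).length := by omega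
    rw [this]
    exact h0
  · have edge : ∀ p, p ≠ m → p ≠ m + 1 →
        wignerLink (extC π m c p) (extC π m c (p + 1)) =
        wignerLink (π (if p < m then p else p - 2)) (π ((if p < m then p else p - 2) + 1)) := by
      intro p hp1 hp2
      rcases Nat.lt_or_ge p m with h | h
      · rw [if_pos h, ext_le (by omega : p ≤ m), ext_le (by omega : p + 1 ≤ m)]
      · have h2 : m + 2 ≤ p := by omega
        rw [if_neg (by omega : ¬ p < m), ext_ge h2, ext_ge (by omega : m + 2 ≤ p + 1)]
        have : p + 1 - 2 = p - 2 + 1 := by omega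
        rw [this]
    have getl : ∀ p, p < (w).length → p ≠ m → p ≠ m + 1 →
        (w)[p]? = (W)[if p < m then p else p - 2]? := by
      intro p hp hp1 hp2
      rcases Nat.lt_or_ge p m with h | h
      · rw [if_pos h]; exact getw_lt u v a h
      · rw [if_neg (by omega : ¬ p < m)]
        exact getw_ge u v a (by omega)
    intro s t hs ht hg
    by_cases hsa : s = m ∨ s = m + 1
    · have hga : (w)[s]? = some a := by
        rcases hsa with rfl | rfl
        · exact getw_m u v a
        · exact getw_m1 u v a
      have hta : t = m ∨ t = m + 1 := a_pos u v a ha ht (hg.symm.trans hga)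
      have em : wignerLink (extC π m c m) (extC π m c (m + 1)) =
          wignerLink (extC π m c (m + 1)) (extC π m c (m + 1 + 1)) := by
        rw [ext_le (le_refl m), ext_m1, ext_ge (by omega : m + 2 ≤ m + 1 + 1)]
        have : m + 1 + 1 - 2 = m := by omega
        rw [this]
        exact wigner_comm _ _
      rcases hsa with rfl | rfl <;> rcases hta with rfl | rfl
      · rfl
      · exact em
      · exact em.symm
      · rfl
    · push_neg at hsa
      have hta : t ≠ m ∧ t ≠ m + 1 := by
        constructor <;> intro hteq <;>
          [ (have : (w)[t]? = some a := hteq ▸ getw_m u v a);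
            (have : (w)[t]? = some a := hteq ▸ getw_m1 u v a) ] <;>
        · rcases a_pos u v a ha hs (hg.trans this) with h | h
          · exact hsa.1 h
          · exact hsa.2 h
      rw [edge s hsa.1 hsa.2, edge t hta.1 hta.2]
      refine hcon _ _ ?_ ?_ ?_
      · split <;> omega
      · split <;> omega
      · rw [← getl s hs hsa.1 hsa.2, ← getl t ht hta.1 hta.2]; exact hg

end Aux

lemma mem_gen_iff (x : List ℕ) (i : ℕ) : i ∈ genVertices x ↔
    i = 0 ∨ (1 ≤ i ∧ i - 1 < x.length ∧ ∀ s < i - 1, x[s]? ≠ x[i - 1]?) := by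
  unfold genVertices
  simp only [Finset.mem_insert, Finset.mem_image, Finset.mem_filter, Finset.mem_range]
  constructor
  · rintro (rfl | ⟨t, ⟨ht, hf⟩, rfl⟩)
    · exact Or.inl rfl
    · refine Or.inr ⟨by omega, by simpa using ht, fun s hs => hf s (by omega)⟩
  · rintro (rfl | ⟨h1, h2, h3⟩)
    · exact Or.inl rfl
    · refine Or.inr ⟨i - 1, ⟨h2, h3⟩, by omega⟩

lemma gen_le {x : List ℕ} {i : ℕ} (h : i ∈ genVertices x) : i ≤ x.length := by
  rw [mem_gen_iff] at h
  rcases h with rfl | ⟨h1, h2, -⟩ <;> omega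

lemma zero_mem_gen (x : List ℕ) : (0 : ℕ) ∈ genVertices x := by
  rw [mem_gen_iff]; exact Or.inl rfl

section Gen

variable (u v : List ℕ) (a : ℕ)

local notation "w" => u ++ a :: a :: v
local notation "W" => u ++ v
local notation "m" => u.length

lemma gen_low {j : ℕ} (hj : j ≤ m) : j ∈ genVertices (w) ↔ j ∈ genVertices (W) := by
  have hlen := len_w u v a
  have hmW := m_le_W u v
  rw [mem_gen_iff, mem_gen_iff]
  constructor <;> rintro (rfl | ⟨h1, h2, h3⟩)
  · exact Or.inl rfl
  · refine Or.inr ⟨h1, by omega, fun s hs heq => ?_⟩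
    exact h3 s hs (by
      rw [getw_lt u v a (show s < m by omega), getw_lt u v a (show j - 1 < m by omega)]
      exact heq)
  · exact Or.inl rfl
  · refine Or.inr ⟨h1, by omega, fun s hs heq => ?_⟩
    exact h3 s hs (by
      rw [← getw_lt u v a (show s < m by omega), ← getw_lt u v a (show j - 1 < m by omega)]
      exact heq)

lemma gen_new (ha : a ∉ (W)) : m + 1 ∈ genVertices (w) := by
  have hlen := len_w u v a
  have hmW := m_le_W u v
  rw [mem_gen_iff]
  refine Or.inr ⟨by omega, by omega, fun s hs heq => ?_⟩
  have hsm : s < m := by omega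
  rw [show m + 1 - 1 = m from rfl, getw_m u v a, getw_lt u v a hsm, getW_lt u v hsm] at heq
  exact ha (List.mem_append_left v (List.mem_of_getElem? heq))

lemma gen_m2 : m + 2 ∉ genVertices (w) := by
  rw [mem_gen_iff]
  rintro (h | ⟨-, -, h3⟩)
  · omega
  · exact h3 m (by omega) (by rw [show m + 2 - 1 = m + 1 from rfl, getw_m u v a, getw_m1 u v a])

lemma gen_high {i : ℕ} (hi : m + 3 ≤ i) (ha : a ∉ (W)) :
    i ∈ genVertices (w) ↔ i - 2 ∈ genVertices (W) := by
  have hlen := len_w u v a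
  have hmW := m_le_W u v
  rw [mem_gen_iff, mem_gen_iff]
  have e1 : i - 2 - 1 = i - 3 := by omega
  have hw1 : (w)[i - 1]? = (W)[i - 3]? := by
    rw [getw_ge u v a (by omega), show i - 1 - 2 = i - 3 by omega]
  constructor
  · rintro (h | ⟨h1, h2, h3⟩)
    · omega
    · refine Or.inr ⟨by omega, by omega, fun s hs heq => ?_⟩
      rw [e1] at heq hs
      rcases Nat.lt_or_ge s m with h | h
      · exact h3 s (by omega) (by rw [getw_lt u v a h, hw1]; exact heq)
      · exact h3 (s + 2) (by omega)
          (by rw [getw_ge u v a (by omega), show s + 2 - 2 = s from rfl, hw1]; exact heq)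
  · rintro (h | ⟨h1, h2, h3⟩)
    · omega
    · rw [e1] at h2 h3
      refine Or.inr ⟨by omega, by omega, fun s hs heq => ?_⟩
      rw [hw1] at heq
      rcases Nat.lt_or_ge s m with h | h
      · exact h3 s (by omega) (by rw [← getw_lt u v a h]; exact heq)
      · rcases Nat.lt_or_ge s (m + 2) with h' | h'
        · have hsa : (w)[s]? = some a := by
            rcases (show s = m ∨ s = m + 1 by omega) with rfl | rfl
            · exact getw_m u v a
            · exact getw_m1 u v a
          rw [hsa] at heq
          exact ha (List.mem_of_getElem? heq.symm)
        · refine h3 (s - 2) (by omega) ?_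
          rw [← getw_ge u v a h']
          exact heq

end Gen

lemma sep {w0 : List ℕ} (hred : DoubleReduces w0) : PairMatchedWord w0 →
    ∃ n π, π ∈ PiStar w0 n ∧ Set.InjOn π ↑(genVertices w0) := by
  induction hred with
  | nil =>
    intro _
    refine ⟨1, fun _ => 1, ⟨fun t _ => by simp, rfl, fun s t hs _ _ => rfl⟩, ?_⟩
    intro i hi j hj _
    have h1 : i ≤ ([] : List ℕ).length := gen_le (Finset.mem_coe.mp hi)
    have h2 : j ≤ ([] : List ℕ).length := gen_le (Finset.mem_coe.mp hj)
    simp at h1 h2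
    omega
  | step u v a hred ih =>
    intro pm
    obtain ⟨pm', ha⟩ := pm_reduce u v a pm
    obtain ⟨n, π', hπ', hinj⟩ := ih pm'
    refine ⟨n + 1, extC π' u.length (n + 1),
      ext_mem u v a hπ' (by omega) (by omega) (by omega) ha, ?_⟩
    intro i hi j hj he
    rw [Finset.mem_coe] at hi hj
    have key : ∀ x, x ∈ genVertices (u ++ a :: a :: v) → x ≠ u.length + 1 →
        extC π' u.length (n + 1) x = π' (if x ≤ u.length then x else x - 2) ∧
        (if x ≤ u.length then x else x - 2) ∈ genVertices (u ++ v) ∧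
        (x ≤ u.length ∨ u.length + 3 ≤ x) := by
      intro x hx hxne
      rcases Nat.lt_or_ge x (u.length + 1) with h | h
      · have hxm : x ≤ u.length := by omega
        rw [if_pos hxm]
        exact ⟨ext_le hxm, (gen_low u v a hxm).mp hx, Or.inl hxm⟩
      · have hx2 : x ≠ u.length + 2 := fun hh => gen_m2 u v a (hh ▸ hx)
        have hx3 : u.length + 3 ≤ x := by omega
        rw [if_neg (by omega)]
        exact ⟨ext_ge (by omega), (gen_high u v a hx3 ha).mp hx, Or.inr hx3⟩
    have hval : ∀ y, y ∈ genVertices (u ++ v) → π' y ≤ n := by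
      intro y hy
      have := hπ'.1 y (gen_le hy)
      simp only [Finset.mem_Icc] at this
      omega
    by_cases hi1 : i = u.length + 1 <;> by_cases hj1 : j = u.length + 1
    · rw [hi1, hj1]
    · obtain ⟨hev, hgv, -⟩ := key j hj hj1
      rw [hi1, ext_m1, hev] at he
      have := hval _ hgv
      omega
    · obtain ⟨hev, hgv, -⟩ := key i hi hi1
      rw [hj1, ext_m1, hev] at he
      have := hval _ hgv
      omega
    · obtain ⟨hevi, hgvi, hbi⟩ := key i hi hi1
      obtain ⟨hevj, hgvj, hbj⟩ := key j hj hj1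
      rw [hevi, hevj] at he
      have hb := hinj (Finset.mem_coe.mpr hgvi) (Finset.mem_coe.mpr hgvj) he
      rcases hbi with h1 | h1 <;> rcases hbj with h2 | h2
      · rw [if_pos h1, if_pos h2] at hb
        exact hb
      · rw [if_pos h1, if_neg (by omega)] at hb
        omega
      · rw [if_neg (by omega), if_pos h2] at hb
        omega
      · rw [if_neg (by omega), if_neg (by omega)] at hb
        omega

lemma existGen {w0 : List ℕ} (hred : DoubleReduces w0) : PairMatchedWord w0 →
    ∀ j ≤ w0.length, j ∉ genVertices w0 →
    ∃ i, i ∈ genVertices w0 ∧ i < j ∧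
      ∀ (n : ℕ) (π : ℕ → ℕ), π ∈ PiStar w0 n → π j = π i := by
  induction hred with
  | nil =>
    intro _ j hj hjS
    simp only [List.length_nil, Nat.le_zero] at hj
    subst hj
    exact absurd (zero_mem_gen []) hjS
  | step u v a hred ih =>
    intro pm j hj hjS
    obtain ⟨pm', ha⟩ := pm_reduce u v a pm
    have hlen := len_w u v a
    have hmW := m_le_W u v
    by_cases hjm : j ≤ u.length
    · have hjS' : j ∉ genVertices (u ++ v) := fun h => hjS ((gen_low u v a hjm).mpr h)
      obtain ⟨i, hig, hilt, hival⟩ := ih pm' j (by omega) hjS'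
      refine ⟨i, (gen_low u v a (by omega)).mpr hig, hilt, ?_⟩
      intro n π hπ
      have h1 := hival n (restrictC π u.length) (restrict_mem u v a hπ)
      rw [restrict_le hjm, restrict_le (by omega : i ≤ u.length)] at h1
      exact h1
    · by_cases hj1 : j = u.length + 1
      · exact absurd (hj1 ▸ gen_new u v a ha) hjS
      · by_cases hj2 : j = u.length + 2
        · subst hj2
          by_cases hm : u.length ∈ genVertices (u ++ v)
          · exact ⟨u.length, (gen_low u v a (le_refl _)).mpr hm, by omega,
              fun n π hπ => forced u v a hπ⟩
          · obtain ⟨i, hig, hilt, hival⟩ := ih pm' u.length (by omega) hm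
            refine ⟨i, (gen_low u v a (by omega)).mpr hig, by omega, ?_⟩
            intro n π hπ
            have h1 := hival n (restrictC π u.length) (restrict_mem u v a hπ)
            rw [restrict_le (le_refl _), restrict_le (by omega : i ≤ u.length)] at h1
            exact (forced u v a hπ).trans h1
        · have hj3 : u.length + 3 ≤ j := by omega
          have hjS' : j - 2 ∉ genVertices (u ++ v) :=
            fun h => hjS ((gen_high u v a hj3 ha).mpr h)
          obtain ⟨i, hig, hilt, hival⟩ := ih pm' (j - 2) (by omega) hjS'
          by_cases him : i ≤ u.length
          · refine ⟨i, (gen_low u v a him).mpr hig, by omega, ?_⟩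
            intro n π hπ
            have h1 := hival n (restrictC π u.length) (restrict_mem u v a hπ)
            rw [restrict_gt (by omega : u.length < j - 2),
              restrict_le him, show j - 2 + 2 = j by omega] at h1
            exact h1
          · refine ⟨i + 2, (gen_high u v a (by omega) ha).mpr
              (by rw [show i + 2 - 2 = i by omega]; exact hig), by omega, ?_⟩
            intro n π hπ
            have h1 := hival n (restrictC π u.length) (restrict_mem u v a hπ)
            rw [restrict_gt (by omega : u.length < j - 2),
              restrict_gt (by omega : u.length < i), show j - 2 + 2 = j by omega] at h1
            exact h1


/-- For a Catalan word `w` of length `2k` and a non-generating vertex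
`j ≤ 2k`, there is a unique generating vertex `i < j` with `π(j) = π(i)` for
every circuit `π ∈ Π*(w)` (for every `n`). -/
theorem stmt17 (k : ℕ) (w : List ℕ) (hw : w.length = 2 * k)
    (hcat : IsCatalanWord w) (j : ℕ) (hj : j ≤ 2 * k) (hjS : j ∉ genVertices w) :
    ∃! i : ℕ, i ∈ genVertices w ∧ i < j ∧
      ∀ (n : ℕ) (π : ℕ → ℕ), π ∈ PiStar w n → π j = π i := by
  obtain ⟨pm, hred⟩ := hcat
  obtain ⟨i, hig, hilt, hival⟩ := existGen hred pm j (by rw [hw]; exact hj) hjS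
  refine ⟨i, ⟨hig, hilt, hival⟩, ?_⟩
  rintro y ⟨hyg, hylt, hyval⟩
  obtain ⟨n, π, hπ, hinj⟩ := sep hred pm
  exact hinj (Finset.mem_coe.mpr hyg) (Finset.mem_coe.mpr hig)
    ((hyval n π hπ).symm.trans (hival n π hπ))
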